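/- Let A, B, C, C' be points of the Euclidean plane such that dist A C ≥ 1, dist B C ≥ 1, dist A B < 2, the angles ∠ B A C and ∠ A B C are both at most π/2, and dist A C' = dist B C' = 1. Then the area of the triangle A B C is at least the area of the triangle A B C'. -/

import Mathlib

open EuclideanGeometry Real MeasureTheory
open scoped RealInnerProductSpace Pointwise

noncomputable def Lmap (u v : EuclideanSpace ℝ (Fin 2)) :
    EuclideanSpace ℝ (Fin 2) →ₗ[ℝ] EuclideanSpace ℝ (Fin 2) where
  toFun := fun x => x 0 • u + x 1 • v
  map_add' := by intro x y; simp [add_smul]; module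
  map_smul' := by intro c x; simp [smul_smul]

lemma Lmap_apply (u v x : EuclideanSpace ℝ (Fin 2)) : Lmap u v x = x 0 • u + x 1 • v := rfl

lemma det_Lmap (u v : EuclideanSpace ℝ (Fin 2)) :
    LinearMap.det (Lmap u v) = u 0 * v 1 - u 1 * v 0 := by
  rw [← LinearMap.det_toMatrix (EuclideanSpace.basisFun (Fin 2) ℝ).toBasis,
    Matrix.det_fin_two]
  simp [LinearMap.toMatrix_apply, Lmap_apply, EuclideanSpace.basisFun_apply]
  ring

lemma vol_hull (A u v : EuclideanSpace ℝ (Fin 2)) :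
    volume (convexHull ℝ ({A, A + u, A + v} : Set (EuclideanSpace ℝ (Fin 2)))) =
      ENNReal.ofReal |u 0 * v 1 - u 1 * v 0| *
        volume (convexHull ℝ ({0, EuclideanSpace.single 0 1, EuclideanSpace.single 1 1} :
          Set (EuclideanSpace ℝ (Fin 2)))) := by
  have h1 : ({A, A + u, A + v} : Set (EuclideanSpace ℝ (Fin 2))) =
      A +ᵥ (Lmap u v '' {0, EuclideanSpace.single 0 1, EuclideanSpace.single 1 1}) := by
    simp [Set.image_insert_eq, Set.vadd_set_insert, Lmap_apply, EuclideanSpace.single_apply]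
  rw [h1, convexHull_vadd, ← LinearMap.image_convexHull, measure_vadd,
    Measure.addHaar_image_linearMap, det_Lmap]

lemma core_ineq (d2 s n2 m2 : ℝ) (hd2 : 0 ≤ d2) (hn : 1 ≤ n2) (hm : 1 ≤ m2)
    (hrel : m2 = n2 - 2*s + d2) (h1 : 0 ≤ s) (h2 : s ≤ d2) :
    d2 - d2^2/4 ≤ d2*n2 - s^2 := by
  rcases le_or_gt s (d2/2) with hc | hc
  · have h3 : d2 * 1 ≤ d2 * n2 := by nlinarith
    nlinarith
  · have h3 : d2 * m2 ≤ d2 * n2 - 2*s*d2 + d2^2 := by nlinarith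
    have h4 : d2 * 1 ≤ d2 * m2 := by nlinarith
    nlinarith [sq_nonneg (d2 - s)]

lemma key_alg (u0 u1 v0 v1 w0 w1 : ℝ)
    (hv : 1 ≤ v0^2 + v1^2) (hw : 1 ≤ (v0-u0)^2 + (v1-u1)^2)
    (h1 : 0 ≤ u0*v0 + u1*v1) (h2 : u0*v0 + u1*v1 ≤ u0^2 + u1^2)
    (hw0 : w0^2 + w1^2 = 1) (hw1 : (w0-u0)^2 + (w1-u1)^2 = 1) :
    (u0*w1 - u1*w0)^2 ≤ (u0*v1 - u1*v0)^2 := by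
  have hsw : u0*w0 + u1*w1 = (u0^2+u1^2)/2 := by nlinarith [hw0, hw1]
  have hLHS : (u0*w1 - u1*w0)^2 = (u0^2+u1^2) - (u0^2+u1^2)^2/4 := by
    have lag : (u0*w1 - u1*w0)^2 = (u0^2+u1^2) * (w0^2+w1^2) - (u0*w0+u1*w1)^2 := by ring
    rw [lag, hw0, hsw]; ring
  have lag2 : (u0*v1 - u1*v0)^2 = (u0^2+u1^2) * (v0^2+v1^2) - (u0*v0+u1*v1)^2 := by ring
  rw [hLHS, lag2]
  have := core_ineq (u0^2+u1^2) (u0*v0+u1*v1) (v0^2+v1^2) ((v0-u0)^2+(v1-u1)^2)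
    (by positivity) hv hw (by ring) h1 h2
  linarith

lemma inner_nonneg_of_angle {F : Type*} [NormedAddCommGroup F] [InnerProductSpace ℝ F]
    (x y : F) (h : InnerProductGeometry.angle x y ≤ π/2) : 0 ≤ ⟪x, y⟫ := by
  by_cases hx : x = 0
  · simp [hx]
  by_cases hy : y = 0
  · simp [hy]
  have h0 := InnerProductGeometry.angle_nonneg x y
  have hc : 0 ≤ Real.cos (InnerProductGeometry.angle x y) :=
    Real.cos_nonneg_of_mem_Icc ⟨by linarith [Real.pi_pos], h⟩
  rw [InnerProductGeometry.cos_angle] at hc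
  have hp : (0:ℝ) < ‖x‖ * ‖y‖ :=
    mul_pos (norm_pos_iff.mpr hx) (norm_pos_iff.mpr hy)
  have := mul_nonneg hc hp.le
  rwa [div_mul_cancel₀ _ hp.ne'] at this

lemma norm_sq_coords (x : EuclideanSpace ℝ (Fin 2)) : ‖x‖^2 = (x 0)^2 + (x 1)^2 := by
  rw [← real_inner_self_eq_norm_sq]
  simp only [PiLp.inner_apply, RCLike.inner_apply, Fin.sum_univ_two, conj_trivial]
  ring

lemma inner_coords (x y : EuclideanSpace ℝ (Fin 2)) : ⟪x, y⟫ = x 0 * y 0 + x 1 * y 1 := by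
  simp [PiLp.inner_apply, RCLike.inner_apply, Fin.sum_univ_two]
  ring

set_option maxHeartbeats 1000000 in
/-- If `dist A C ≥ 1`, `dist B C ≥ 1`, `dist A B < 2`, the angles at `A` and `B` in the
triangle `A B C` are at most `π/2`, and `C'` satisfies `dist A C' = dist B C' = 1`, then the
area of the triangle `A B C` is at least the area of the triangle `A B C'`. -/
theorem area_triangle_ge_of_shorter_sides (A B C C' : EuclideanSpace ℝ (Fin 2))
    (hAC : 1 ≤ dist A C) (hBC : 1 ≤ dist B C) (hAB : dist A B < 2)
    (hA : ∠ B A C ≤ π / 2) (hB : ∠ A B C ≤ π / 2)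
    (hAC' : dist A C' = 1) (hBC' : dist B C' = 1) :
    volume (convexHull ℝ ({A, B, C'} : Set (EuclideanSpace ℝ (Fin 2)))) ≤
      volume (convexHull ℝ ({A, B, C} : Set (EuclideanSpace ℝ (Fin 2)))) := by
  set u := B - A with hu
  set v := C - A with hv
  set w := C' - A with hw
  have hB' : B = A + u := by rw [hu]; abel
  have hC' : C = A + v := by rw [hv]; abel
  have hC'' : C' = A + w := by rw [hw]; abel
  -- coordinate facts
  have hv1 : 1 ≤ (v 0)^2 + (v 1)^2 := by
    have : 1 ≤ ‖v‖ := by rw [hv, ← dist_eq_norm, dist_comm]; exact hAC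
    calc (1:ℝ) = 1^2 := by ring
    _ ≤ ‖v‖^2 := by nlinarith
    _ = _ := norm_sq_coords v
  have hv2 : 1 ≤ (v 0 - u 0)^2 + (v 1 - u 1)^2 := by
    have h1 : 1 ≤ ‖v - u‖ := by
      have : v - u = C - B := by rw [hv, hu]; abel
      rw [this, ← dist_eq_norm, dist_comm]; exact hBC
    have h2 := norm_sq_coords (v - u)
    simp only [PiLp.sub_apply] at h2
    nlinarith
  have hw1 : (w 0)^2 + (w 1)^2 = 1 := by
    have : ‖w‖ = 1 := by rw [hw, ← dist_eq_norm, dist_comm]; exact hAC'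
    rw [← norm_sq_coords, this]; norm_num
  have hw2 : (w 0 - u 0)^2 + (w 1 - u 1)^2 = 1 := by
    have h1 : ‖w - u‖ = 1 := by
      have : w - u = C' - B := by rw [hw, hu]; abel
      rw [this, ← dist_eq_norm, dist_comm]; exact hBC'
    have h2 := norm_sq_coords (w - u)
    simp only [PiLp.sub_apply] at h2
    nlinarith
  -- angle facts
  have hiA : 0 ≤ u 0 * v 0 + u 1 * v 1 := by
    have := inner_nonneg_of_angle (B -ᵥ A) (C -ᵥ A) hA
    rw [vsub_eq_sub, vsub_eq_sub, ← hu, ← hv, inner_coords] at this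
    exact this
  have hiB : u 0 * v 0 + u 1 * v 1 ≤ (u 0)^2 + (u 1)^2 := by
    have := inner_nonneg_of_angle (A -ᵥ B) (C -ᵥ B) hB
    rw [vsub_eq_sub, vsub_eq_sub, inner_coords] at this
    have e1 : A - B = -u := by rw [hu]; abel
    have e2 : C - B = v - u := by rw [hv, hu]; abel
    rw [e1, e2] at this
    simp only [PiLp.sub_apply, PiLp.neg_apply] at this
    nlinarith
  -- conclude
  have key := key_alg (u 0) (u 1) (v 0) (v 1) (w 0) (w 1) hv1 hv2 hiA hiB hw1 hw2
  rw [hB', hC', hC'', vol_hull, vol_hull]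
  apply mul_le_mul_left
  apply ENNReal.ofReal_le_ofReal
  have h1 : |u 0 * w 1 - u 1 * w 0| = Real.sqrt ((u 0 * w 1 - u 1 * w 0)^2) :=
    (Real.sqrt_sq_eq_abs _).symm
  have h2 : |u 0 * v 1 - u 1 * v 0| = Real.sqrt ((u 0 * v 1 - u 1 * v 0)^2) :=
    (Real.sqrt_sq_eq_abs _).symm
  rw [h1, h2]
  exact Real.sqrt_le_sqrt key
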